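/- Let n ≥ 2 and let f_0,…,f_n be n+1 vectors in ℝ^n, each belonging to the root system B_n = {±e_i : 1 ≤ i ≤ n} ∪ {±e_i ± e_j : 1 ≤ i < j ≤ n}, such that any n of the vectors f_0,…,f_n are linearly independent. Suppose at least two of the vectors f_k belong to {±e_1,…,±e_n}. Then there exist a permutation σ of {1,…,n} and signs ε_1,…,ε_n ∈ {+1,−1} such that, setting b_i = ε_i e_{σ(i)}, one has the equality of sets {±f_0, ±f_1, …, ±f_n} = {±b_1} ∪ {±(b_i − b_{i+1}) : 1 ≤ i ≤ n−1} ∪ {±b_n}; that is, the configuration is exactly that of the Coxeter simplex C̃_n. -/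

import Mathlib

noncomputable section

/-- The standard basis vector `e i` of `ℝⁿ`. -/
def stdE (n : ℕ) (i : Fin n) : EuclideanSpace ℝ (Fin n) :=
  EuclideanSpace.single i 1

/-- Membership in the short roots `{± e i}` of the root system `Bₙ`. -/
def IsShortRootB (n : ℕ) (v : EuclideanSpace ℝ (Fin n)) : Prop :=
  ∃ i : Fin n, v = stdE n i ∨ v = -stdE n i

/-- Membership in the long roots `{± e i ± e j, i ≠ j}` (the root system `Dₙ`). -/
def IsLongRootB (n : ℕ) (v : EuclideanSpace ℝ (Fin n)) : Prop :=
  ∃ i j : Fin n, i ≠ j ∧ ∃ s t : ℝ, (s = 1 ∨ s = -1) ∧ (t = 1 ∨ t = -1) ∧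
    v = s • stdE n i + t • stdE n j

/-- Membership in the root system `Bₙ = {± e i} ∪ {± e i ± e j, i < j}`. -/
def IsRootB (n : ℕ) (v : EuclideanSpace ℝ (Fin n)) : Prop :=
  IsShortRootB n v ∨ IsLongRootB n v



/-- Let `f 0, …, f n` be `n + 1` roots of `Bₙ` in `ℝⁿ` (`n ≥ 2`) such that any
`n` of them are linearly independent.  If at least two of the vectors are short roots `± e i`,
then, for some permutation `σ` and signs `ε`, setting `bᵢ = εᵢ e_{σ(i)}` (here `b` is indexed by
`0, …, n-1`), the set `{± f k}` is `{± b₀} ∪ {± (bᵢ - bᵢ₊₁) : 0 ≤ i ≤ n-2} ∪ {± b_{n-1}}`: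
the configuration of the Coxeter simplex `C̃ₙ`. -/
lemma stdE_apply {n : ℕ} (i j : Fin n) : stdE n i j = if j = i then 1 else 0 :=
  EuclideanSpace.single_apply i 1 j

lemma sum_coord {n N : ℕ} (c : Fin N → ℝ) (f : Fin N → EuclideanSpace ℝ (Fin n)) (i : Fin n) :
    (∑ k, c k • f k) i = ∑ k, c k * f k i := by
  have h := map_sum (EuclideanSpace.proj i (𝕜 := ℝ)) (fun k => c k • f k) Finset.univ
  simp only [PiLp.proj_apply, map_smul, smul_eq_mul] at h
  exact h

lemma short_supp {n : ℕ} {v : EuclideanSpace ℝ (Fin n)} (h : IsShortRootB n v) :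
    ∃ a, (v a = 1 ∨ v a = -1) ∧ ∀ j, j ≠ a → v j = 0 := by
  obtain ⟨a, h | h⟩ := h <;>
    exact ⟨a, by simp [h, stdE_apply, PiLp.neg_apply],
      fun j hj => by simp [h, stdE_apply, hj, PiLp.neg_apply]⟩

lemma long_supp {n : ℕ} {v : EuclideanSpace ℝ (Fin n)} (h : IsLongRootB n v) :
    ∃ i j, i ≠ j ∧ (v i = 1 ∨ v i = -1) ∧ (v j = 1 ∨ v j = -1) ∧
      ∀ l, l ≠ i → l ≠ j → v l = 0 := by
  obtain ⟨i, j, hij, s, t, hs, ht, rfl⟩ := h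
  have hvi : ∀ l : Fin n, (s • stdE n i + t • stdE n j) l =
      s * (if l = i then (1:ℝ) else 0) + t * (if l = j then (1:ℝ) else 0) := by
    intro l
    simp [PiLp.add_apply, PiLp.smul_apply, stdE_apply, smul_eq_mul]
  refine ⟨i, j, hij, ?_, ?_, fun l hl1 hl2 => ?_⟩
  · rw [hvi, if_pos rfl, if_neg hij]; simpa using hs
  · rw [hvi, if_pos rfl, if_neg (Ne.symm hij)]; simpa using ht
  · rw [hvi]; simp [hl1, hl2]

lemma recon_one {n : ℕ} (v : EuclideanSpace ℝ (Fin n)) (a : Fin n)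
    (h : ∀ j, j ≠ a → v j = 0) : v = v a • stdE n a := by
  ext j
  by_cases hj : j = a
  · subst hj; simp [PiLp.smul_apply, stdE_apply, smul_eq_mul]
  · simp [PiLp.smul_apply, stdE_apply, hj, h j hj, smul_eq_mul]

lemma recon_two {n : ℕ} (v : EuclideanSpace ℝ (Fin n)) (i i' : Fin n) (hne : i ≠ i')
    (h : ∀ j, j ≠ i → j ≠ i' → v j = 0) : v = v i • stdE n i + v i' • stdE n i' := by
  ext j
  by_cases h1 : j = i
  · subst h1; simp [PiLp.add_apply, PiLp.smul_apply, stdE_apply, smul_eq_mul, hne.symm]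
    intro h'; exact absurd h' hne
  by_cases h2 : j = i'
  · subst h2; simp [PiLp.add_apply, PiLp.smul_apply, stdE_apply, smul_eq_mul, h1]
  · simp [PiLp.add_apply, PiLp.smul_apply, stdE_apply, smul_eq_mul, h1, h2, h j h1 h2]

lemma pair_other {α : Type*} [DecidableEq α] {s : Finset α} (h : s.card = 2) {x : α}
    (hx : x ∈ s) : ∃ y, y ≠ x ∧ s = {x, y} := by
  obtain ⟨a, b, hab, rfl⟩ := Finset.card_eq_two.1 h
  rcases Finset.mem_insert.1 hx with rfl | hx'
  · exact ⟨b, hab.symm, rfl⟩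
  · rcases Finset.mem_singleton.1 hx' with rfl
    exact ⟨a, hab, Finset.pair_comm a x⟩

/-- Invariants of the walk through coordinates. -/
lemma walk_inv {n : ℕ} (f : Fin (n+1) → EuclideanSpace ℝ (Fin n))
    (H : Fin n → Finset (Fin (n+1))) (hH : ∀ i k, k ∈ H i ↔ f k i ≠ 0)
    (supp : Fin (n+1) → Finset (Fin n)) (hS : ∀ k i, i ∈ supp k ↔ f k i ≠ 0)
    (v : ℕ → Fin n) (g : ℕ → Fin (n+1))
    (hoth : ∀ m, g m ∈ H (v m) → g (m+1) ≠ g m ∧ H (v m) = {g m, g (m+1)})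
    (hend : ∀ m, f (g (m+1)) (v m) ≠ 0 → (supp (g (m+1))).card = 2 →
      v (m+1) ≠ v m ∧ supp (g (m+1)) = {v m, v (m+1)})
    (hsupp0 : supp (g 0) = {v 0})
    (hg0 : f (g 0) (v 0) ≠ 0) :
    ∀ m, (∀ p, 1 ≤ p → p ≤ m → (supp (g p)).card = 2) →
      (∀ p, p ≤ m → f (g p) (v p) ≠ 0) ∧
      (∀ p, p ≤ m → H (v p) = {g p, g (p+1)} ∧ g (p+1) ≠ g p) ∧
      (∀ p, p < m → supp (g (p+1)) = {v p, v (p+1)} ∧ v (p+1) ≠ v p) ∧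
      (∀ p q, p ≤ m → q ≤ m → v p = v q → p = q) ∧
      (∀ p q, p ≤ m → q ≤ m → g p = g q → p = q) := by
  intro m
  induction m with
  | zero =>
    intro _
    refine ⟨?_, ?_, ?_, ?_, ?_⟩
    · intro p hp; interval_cases p; exact hg0
    · intro p hp; interval_cases p
      obtain ⟨h1, h2⟩ := hoth 0 ((hH _ _).2 hg0)
      exact ⟨h2, h1⟩
    · intro p hp; omega
    · intro p q hp hq _; omega
    · intro p q hp hq _; omega
  | succ m ih =>
    intro hQ
    obtain ⟨A, B, C, D, E⟩ := ih (fun p h1 h2 => hQ p h1 (by omega))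
    -- facts about step m+1
    have hBm := B m le_rfl
    have hg1H : g (m+1) ∈ H (v m) := by
      rw [hBm.1]; exact Finset.mem_insert_of_mem (Finset.mem_singleton_self _)
    have hfg1vm : f (g (m+1)) (v m) ≠ 0 := (hH _ _).1 hg1H
    have hcard2 : (supp (g (m+1))).card = 2 := hQ (m+1) (by omega) le_rfl
    obtain ⟨hvne, hsupp_eq⟩ := hend m hfg1vm hcard2
    have hA1 : f (g (m+1)) (v (m+1)) ≠ 0 := by
      have : v (m+1) ∈ supp (g (m+1)) := by
        rw [hsupp_eq]; exact Finset.mem_insert_of_mem (Finset.mem_singleton_self _)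
      exact (hS _ _).1 this
    -- supp of g q for q ≤ m is contained in visited vertices
    have hsupp_g : ∀ q, q ≤ m → (supp (g q) = {v 0} ∨
        (1 ≤ q ∧ supp (g q) = {v (q-1), v q})) := by
      intro q hq
      rcases Nat.eq_zero_or_pos q with rfl | hq1
      · exact Or.inl hsupp0
      · right
        refine ⟨hq1, ?_⟩
        have := (C (q-1) (by omega)).1
        have hq' : q - 1 + 1 = q := by omega
        rw [hq'] at this
        exact this
    -- E extended : g (m+1) differs from all earlier g q
    have hEnew : ∀ q, q ≤ m → g q ≠ g (m+1) := by
      intro q hq hgq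
      have hvm_mem : v m ∈ supp (g q) := by
        rw [hgq]; exact (hS _ _).2 hfg1vm
      rcases hsupp_g q hq with h | ⟨hq1, h⟩
      · rw [h, Finset.mem_singleton] at hvm_mem
        have hm0 : m = 0 := D m 0 le_rfl (by omega) hvm_mem
        have : q = 0 := by omega
        subst this; subst hm0
        exact (hBm.2) hgq.symm
      · rw [h, Finset.mem_insert, Finset.mem_singleton] at hvm_mem
        rcases hvm_mem with h' | h'
        · have : m = q - 1 := D m (q-1) le_rfl (by omega) h'
          omega  -- q = m+1 > m contradiction with q ≤ m
        · have : m = q := D m q le_rfl hq h'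
          subst this
          exact (hBm.2) hgq.symm
    -- D extended
    have hDnew : ∀ q, q ≤ m → v q ≠ v (m+1) := by
      intro q hq hvq
      have hg1Hq : g (m+1) ∈ H (v q) := by
        rw [hvq, hH]; exact hA1
      rcases Nat.lt_or_ge q m with hqm | hqm
      · rw [(B q (by omega)).1, Finset.mem_insert, Finset.mem_singleton] at hg1Hq
        rcases hg1Hq with h' | h'
        · exact hEnew q hq h'.symm
        · exact hEnew (q+1) (by omega) h'.symm
      · have : q = m := by omega
        subst this
        exact hvne hvq.symm
    refine ⟨?_, ?_, ?_, ?_, ?_⟩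
    · intro p hp
      rcases Nat.lt_or_ge p (m+1) with h | h
      · exact A p (by omega)
      · have : p = m + 1 := by omega
        subst this; exact hA1
    · intro p hp
      rcases Nat.lt_or_ge p (m+1) with h | h
      · exact B p (by omega)
      · have : p = m + 1 := by omega
        subst this
        obtain ⟨h1, h2⟩ := hoth (m+1) ((hH _ _).2 hA1)
        exact ⟨h2, h1⟩
    · intro p hp
      rcases Nat.lt_or_ge p m with h | h
      · exact C p h
      · have : p = m := by omega
        subst this; exact ⟨hsupp_eq, hvne⟩
    · intro p q hp hq hpq
      rcases Nat.lt_or_ge p (m+1) with h1 | h1 <;> rcases Nat.lt_or_ge q (m+1) with h2 | h2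
      · exact D p q (by omega) (by omega) hpq
      · exact absurd ((by omega : q = m+1) ▸ hpq) (hDnew p (by omega))
      · exact absurd ((by omega : p = m+1) ▸ hpq).symm (hDnew q (by omega))
      · omega
    · intro p q hp hq hpq
      rcases Nat.lt_or_ge p (m+1) with h1 | h1 <;> rcases Nat.lt_or_ge q (m+1) with h2 | h2
      · exact E p q (by omega) (by omega) hpq
      · exact absurd ((by omega : q = m+1) ▸ hpq) (hEnew p (by omega))
      · exact absurd ((by omega : p = m+1) ▸ hpq).symm (hEnew q (by omega))
      · omega


theorem family_Cn_of_two_short {n : ℕ} (hn : 2 ≤ n)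
    (f : Fin (n + 1) → EuclideanSpace ℝ (Fin n))
    (hroot : ∀ k, IsRootB n (f k))
    (hind : ∀ k : Fin (n + 1),
      LinearIndependent ℝ (fun m : {m : Fin (n + 1) // m ≠ k} => f (m : Fin (n + 1))))
    (htwo : ∃ k l : Fin (n + 1), k ≠ l ∧ IsShortRootB n (f k) ∧ IsShortRootB n (f l)) :
    ∃ (σ : Equiv.Perm (Fin n)) (ε : Fin n → ℝ), (∀ i, ε i = 1 ∨ ε i = -1) ∧
      ∃ b : ℕ → EuclideanSpace ℝ (Fin n), (∀ i : Fin n, b i = ε i • stdE n (σ i)) ∧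
        {v : EuclideanSpace ℝ (Fin n) | ∃ k, v = f k ∨ v = -f k} =
          {v : EuclideanSpace ℝ (Fin n) | v = b 0 ∨ v = -b 0 ∨ v = b (n - 1) ∨ v = -b (n - 1)} ∪
          {v : EuclideanSpace ℝ (Fin n) | ∃ i : ℕ, i ≤ n - 2 ∧
            (v = b i - b (i + 1) ∨ v = -(b i - b (i + 1)))} := by
  classical
  have finrankE : Module.finrank ℝ (EuclideanSpace ℝ (Fin n)) = n := by simp
  -- KEY: any linear relation with one zero coefficient is trivial
  have key : ∀ (c : Fin (n + 1) → ℝ) (k0 : Fin (n+1)), c k0 = 0 →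
      ∑ k, c k • f k = 0 → ∀ k, c k = 0 := by
    intro c k0 h0 hsum
    have li := hind k0
    rw [Fintype.linearIndependent_iff] at li
    have h1 : ∑ x ∈ Finset.univ \ {k0}, c x • f x
        = ∑ m : {m : Fin (n+1) // m ≠ k0}, c m.1 • f m.1 :=
      Finset.sum_subtype _ (by simp) _
    have h2 : ∑ k, c k • f k = ∑ x ∈ Finset.univ \ {k0}, c x • f x := by
      rw [Finset.sum_eq_sum_sdiff_singleton_add (Finset.mem_univ k0), h0, zero_smul, add_zero]
    have hsub : ∑ m : {m : Fin (n+1) // m ≠ k0}, c m.1 • f m.1 = 0 := by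
      rw [← h1, ← h2, hsum]
    have hz := li (fun m => c m.1) hsub
    intro k
    by_cases hk : k = k0
    · rw [hk]; exact h0
    · exact hz ⟨k, hk⟩
  -- a global relation with all coefficients nonzero
  have hnli : ¬ LinearIndependent ℝ f := by
    intro h
    have := LinearIndependent.fintype_card_le_finrank h
    rw [finrankE] at this
    simp at this
  obtain ⟨c, hcsum, i0, hi0⟩ := Fintype.not_linearIndependent_iff.1 hnli
  have hcne : ∀ k, c k ≠ 0 := by
    intro k hk
    exact hi0 (key c k hk hcsum i0)
  -- supports
  set supp : Fin (n+1) → Finset (Fin n) :=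
    fun k => Finset.univ.filter (fun i => f k i ≠ 0) with hsuppdef
  have hsupp_mem : ∀ k i, i ∈ supp k ↔ f k i ≠ 0 := by
    intro k i; simp [hsuppdef]
  have hval : ∀ k i, f k i ≠ 0 → (f k i = 1 ∨ f k i = -1) := by
    intro k i hi
    rcases hroot k with h | h
    · obtain ⟨a, ha, h0⟩ := short_supp h
      by_cases hia : i = a
      · rw [hia]; exact ha
      · exact absurd (h0 i hia) hi
    · obtain ⟨i1, j1, _, h1, h2, h0⟩ := long_supp h
      by_cases e1 : i = i1
      · rw [e1]; exact h1
      by_cases e2 : i = j1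
      · rw [e2]; exact h2
      · exact absurd (h0 i e1 e2) hi
  have hshort_supp : ∀ k, IsShortRootB n (f k) → ∃ a, supp k = {a} := by
    intro k hk
    obtain ⟨a, ha, h0⟩ := short_supp hk
    refine ⟨a, ?_⟩
    ext j
    rw [hsupp_mem, Finset.mem_singleton]
    constructor
    · intro hj; by_contra hja; exact hj (h0 j hja)
    · rintro rfl; rcases ha with h | h <;> rw [h] <;> norm_num
  have hlong_card : ∀ k, IsLongRootB n (f k) → (supp k).card = 2 := by
    intro k hk
    obtain ⟨i1, j1, hij, h1, h2, h0⟩ := long_supp hk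
    have : supp k = {i1, j1} := by
      ext l
      rw [hsupp_mem, Finset.mem_insert, Finset.mem_singleton]
      constructor
      · intro hl; by_contra hc; push_neg at hc
        exact hl (h0 l hc.1 hc.2)
      · rintro (rfl | rfl)
        · rcases h1 with h | h <;> rw [h] <;> norm_num
        · rcases h2 with h | h <;> rw [h] <;> norm_num
    rw [this, Finset.card_insert_of_notMem (by simpa using hij), Finset.card_singleton]
  have hcard12 : ∀ k, (supp k).card = 1 ∨ (supp k).card = 2 := by
    intro k
    rcases hroot k with h | h
    · obtain ⟨a, ha⟩ := hshort_supp k h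
      left; rw [ha]; exact Finset.card_singleton a
    · exact Or.inr (hlong_card k h)
  have hshort_iff : ∀ k, IsShortRootB n (f k) ↔ (supp k).card = 1 := by
    intro k
    constructor
    · intro h; obtain ⟨a, ha⟩ := hshort_supp k h; rw [ha]; exact Finset.card_singleton a
    · intro h
      rcases hroot k with h' | h'
      · exact h'
      · rw [hlong_card k h'] at h; omega
  -- the incidence sets H i
  set H : Fin n → Finset (Fin (n+1)) :=
    fun i => Finset.univ.filter (fun k => f k i ≠ 0) with hHdef
  have hH_mem : ∀ (i : Fin n) (k), k ∈ H i ↔ f k i ≠ 0 := by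
    intro i k; simp [hHdef]
  -- each coordinate is hit
  have hH1 : ∀ i, (H i).Nonempty := by
    intro i
    by_contra hne
    rw [Finset.not_nonempty_iff_eq_empty] at hne
    have hz : ∀ k, f k i = 0 := by
      intro k
      by_contra hk
      have : k ∈ H i := (hH_mem i k).2 hk
      rw [hne] at this; exact absurd this (Finset.notMem_empty k)
    -- the family omitting index 0 is a basis, but lies in ker (proj i)
    have hcard : Fintype.card {m : Fin (n+1) // m ≠ (0 : Fin (n+1))} =
        Module.finrank ℝ (EuclideanSpace ℝ (Fin n)) := by
      rw [finrankE, Fintype.card_subtype_compl, Fintype.card_subtype_eq, Fintype.card_fin]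
      omega
    haveI : Nonempty {m : Fin (n+1) // m ≠ (0 : Fin (n+1))} :=
      ⟨⟨⟨1, by omega⟩, by simp [Fin.ext_iff]⟩⟩
    let B := basisOfLinearIndependentOfCardEqFinrank (hind 0) hcard
    have hBspan : Submodule.span ℝ (Set.range fun m : {m : Fin (n+1) // m ≠ (0:Fin (n+1))}
        => f m.1) = ⊤ := by
      have := B.span_eq
      rwa [coe_basisOfLinearIndependentOfCardEqFinrank] at this
    have hle : Submodule.span ℝ (Set.range fun m : {m : Fin (n+1) // m ≠ (0:Fin (n+1))}
        => f m.1) ≤ LinearMap.ker (EuclideanSpace.projₗ i (𝕜 := ℝ)) := by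
      rw [Submodule.span_le]
      rintro x ⟨m, rfl⟩
      simp [LinearMap.mem_ker, hz]
    rw [hBspan, top_le_iff] at hle
    have : stdE n i ∈ LinearMap.ker (EuclideanSpace.projₗ i (𝕜 := ℝ)) := by
      rw [hle]; trivial
    rw [LinearMap.mem_ker] at this
    have h1 : (stdE n i) i = 1 := by rw [stdE_apply]; simp
    have : (stdE n i) i = 0 := this
    rw [h1] at this
    exact one_ne_zero this
  have hHne1 : ∀ i, (H i).card ≠ 1 := by
    intro i hcard1
    obtain ⟨k1, hk1⟩ := Finset.card_eq_one.1 hcard1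
    have hrel : ∑ k, c k * f k i = 0 := by
      have := congrArg (fun x => x i) hcsum
      rw [sum_coord] at this
      simpa using this
    have hone : ∑ k, c k * f k i = c k1 * f k1 i := by
      apply Finset.sum_eq_single_of_mem k1 (Finset.mem_univ k1)
      intro k _ hk
      have : f k i = 0 := by
        by_contra h
        have : k ∈ H i := (hH_mem i k).2 h
        rw [hk1, Finset.mem_singleton] at this
        exact hk this
      rw [this, mul_zero]
    have hk1i : f k1 i ≠ 0 := by
      have : k1 ∈ H i := by rw [hk1]; exact Finset.mem_singleton_self k1
      exact (hH_mem i k1).1 this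
    rw [hone] at hrel
    rcases mul_eq_zero.1 hrel with h | h
    · exact hcne k1 h
    · exact hk1i h
  have hH2 : ∀ i, 2 ≤ (H i).card := by
    intro i
    have := Finset.Nonempty.card_pos (hH1 i)
    have := hHne1 i
    omega
  -- double counting
  have hdc : ∑ i, (H i).card = ∑ k, (supp k).card := by
    simp only [hHdef, hsuppdef, Finset.card_filter]
    exact Finset.sum_comm
  obtain ⟨ka, kb, hkab, hka, hkb⟩ := htwo
  set S : Finset (Fin (n+1)) := Finset.univ.filter (fun k => (supp k).card = 1) with hSdef
  have hS_mem : ∀ k, k ∈ S ↔ (supp k).card = 1 := by intro k; simp [hSdef]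
  have hsum_supp : ∑ k, (supp k).card = S.card * 1 + (Finset.univ.filter
      (fun k => ¬ (supp k).card = 1)).card * 2 := by
    rw [← Finset.sum_filter_add_sum_filter_not Finset.univ (fun k => (supp k).card = 1)]
    congr 1
    · rw [Finset.sum_congr rfl (fun k hk => (Finset.mem_filter.1 hk).2), Finset.sum_const,
        smul_eq_mul]
    · rw [Finset.sum_congr rfl (fun k hk => ?_), Finset.sum_const, smul_eq_mul]
      have := (Finset.mem_filter.1 hk).2
      rcases hcard12 k with h | h
      · exact absurd h this
      · exact h
  have hScompl : (Finset.univ.filter (fun k => ¬ (supp k).card = 1)).card = n + 1 - S.card := by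
    have := Finset.card_filter_add_card_filter_not (s := (Finset.univ : Finset (Fin (n+1))))
      (p := fun k => (supp k).card = 1)
    rw [Finset.card_univ, Fintype.card_fin] at this
    rw [hSdef]
    omega
  have hSle : S.card ≤ n + 1 := by
    have := Finset.card_le_univ S
    simpa using this
  have hsum_ge : 2 * n ≤ ∑ i, (H i).card := by
    calc 2 * n = ∑ _i : Fin n, 2 := by rw [Finset.sum_const, Finset.card_univ,
          Fintype.card_fin, smul_eq_mul, mul_comm]
    _ ≤ ∑ i, (H i).card := Finset.sum_le_sum (fun i _ => hH2 i)
  have hkaS : ka ∈ S := (hS_mem ka).2 ((hshort_iff ka).1 hka)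
  have hkbS : kb ∈ S := (hS_mem kb).2 ((hshort_iff kb).1 hkb)
  have hS2 : S.card = 2 := by
    have hge : 2 ≤ S.card := by
      have : ({ka, kb} : Finset (Fin (n+1))) ⊆ S := by
        intro x hx
        rcases Finset.mem_insert.1 hx with rfl | hx'
        · exact hkaS
        · rw [Finset.mem_singleton] at hx'; rw [hx']; exact hkbS
      calc 2 = ({ka, kb} : Finset (Fin (n+1))).card := by
            rw [Finset.card_insert_of_notMem (by simpa using hkab), Finset.card_singleton]
      _ ≤ S.card := Finset.card_le_card this
    have hle : S.card ≤ 2 := by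
      rw [hdc, hsum_supp, hScompl] at hsum_ge
      omega
    omega
  have hSeq : S = {ka, kb} := by
    symm
    apply Finset.eq_of_subset_of_card_le
    · intro x hx
      rcases Finset.mem_insert.1 hx with rfl | hx'
      · exact hkaS
      · rw [Finset.mem_singleton] at hx'; rw [hx']; exact hkbS
    · rw [hS2, Finset.card_insert_of_notMem (by simpa using hkab), Finset.card_singleton]
  have hHcard : ∀ i, (H i).card = 2 := by
    intro i
    by_contra hne
    have h3 : 2 < (H i).card := by have := hH2 i; omega
    have : ∑ _i : Fin n, 2 < ∑ i, (H i).card :=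
      Finset.sum_lt_sum (fun j _ => hH2 j) ⟨i, Finset.mem_univ i, h3⟩
    rw [Finset.sum_const, Finset.card_univ, Fintype.card_fin, smul_eq_mul] at this
    rw [hdc, hsum_supp, hScompl, hS2] at this
    omega
  -- short root data
  obtain ⟨a, hsa⟩ := hshort_supp ka hka
  obtain ⟨bb, hsb⟩ := hshort_supp kb hkb
  have hfkaa : f ka a ≠ 0 := (hsupp_mem ka a).1 (by rw [hsa]; exact Finset.mem_singleton_self a)
  -- choice of "other" functions
  have hothex : ∀ (i : Fin n) (k : Fin (n+1)), k ∈ H i → ∃ k', k' ≠ k ∧ H i = {k, k'} :=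
    fun i k hk => pair_other (hHcard i) hk
  choose! oth hoth1 hoth2 using hothex
  have hendex : ∀ (k : Fin (n+1)) (i : Fin n), i ∈ supp k → (supp k).card = 2 →
      ∃ j, j ≠ i ∧ supp k = {i, j} := fun k i hi h2 => pair_other h2 hi
  choose! endp hend1 hend2 using hendex
  -- the walk
  let w : ℕ → Fin n × Fin (n+1) := fun m =>
    Nat.rec (a, ka) (fun _ p => (endp (oth p.1 p.2) p.1, oth p.1 p.2)) m
  set v : ℕ → Fin n := fun m => (w m).1 with hvdef
  set g : ℕ → Fin (n+1) := fun m => (w m).2 with hgdef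
  have hv0 : v 0 = a := rfl
  have hg0 : g 0 = ka := rfl
  have hgs : ∀ m, g (m+1) = oth (v m) (g m) := fun m => rfl
  have hvs : ∀ m, v (m+1) = endp (g (m+1)) (v m) := fun m => rfl
  have hoth' : ∀ m, g m ∈ H (v m) → g (m+1) ≠ g m ∧ H (v m) = {g m, g (m+1)} := by
    intro m hm
    rw [hgs m]
    exact ⟨hoth1 _ _ hm, hoth2 _ _ hm⟩
  have hend' : ∀ m, f (g (m+1)) (v m) ≠ 0 → (supp (g (m+1))).card = 2 →
      v (m+1) ≠ v m ∧ supp (g (m+1)) = {v m, v (m+1)} := by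
    intro m h1 h2
    rw [hvs m]
    exact ⟨hend1 _ _ ((hsupp_mem _ _).2 h1) h2, hend2 _ _ ((hsupp_mem _ _).2 h1) h2⟩
  have hsupp0 : supp (g 0) = {v 0} := by rw [hg0, hv0]; exact hsa
  have hfg00 : f (g 0) (v 0) ≠ 0 := by rw [hg0, hv0]; exact hfkaa
  have INV := walk_inv f H hH_mem supp hsupp_mem v g hoth' hend' hsupp0 hfg00
  -- the stopping time
  have hexist : ∃ p, p < n ∧ (supp (g (p+1))).card = 1 := by
    by_contra hcon
    push_neg at hcon
    have hQ : ∀ p, 1 ≤ p → p ≤ n → (supp (g p)).card = 2 := by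
      intro p h1 h2
      rcases hcard12 (g p) with h | h
      · exfalso
        obtain ⟨p', rfl⟩ : ∃ p', p = p' + 1 := ⟨p - 1, by omega⟩
        exact hcon p' (by omega) h
      · exact h
    obtain ⟨_, _, _, D, _⟩ := INV n hQ
    have hcard : Finset.card ((Finset.range (n+1)).image v) = n + 1 := by
      rw [Finset.card_image_of_injOn, Finset.card_range]
      intro p hp q hq hpq
      exact D p q (by simp only [Finset.mem_coe, Finset.mem_range] at hp; omega)
        (by simp only [Finset.mem_coe, Finset.mem_range] at hq; omega) hpq
    have hle := Finset.card_le_univ ((Finset.range (n+1)).image v)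
    rw [hcard] at hle
    simp only [Finset.card_univ, Fintype.card_fin] at hle
    omega
  set M : ℕ := Nat.find hexist with hMdef
  have hM := Nat.find_spec hexist
  have hQM : ∀ p, 1 ≤ p → p ≤ M → (supp (g p)).card = 2 := by
    intro p h1 h2
    rcases hcard12 (g p) with h | h
    · exfalso
      obtain ⟨p', rfl⟩ : ∃ p', p = p' + 1 := ⟨p - 1, by omega⟩
      have := Nat.find_min hexist (m := p') (by omega)
      push_neg at this
      exact absurd h (this (by omega))
    · exact h
  obtain ⟨A, B, C, D, E⟩ := INV M hQM
  have hgM1_short : g (M+1) ∈ S := (hS_mem _).2 hM.2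
  rw [hSeq] at hgM1_short
  have hBM := B M le_rfl
  have hg1HM : g (M+1) ∈ H (v M) := by
    rw [hBM.1]; exact Finset.mem_insert_of_mem (Finset.mem_singleton_self _)
  have hfgM1 : f (g (M+1)) (v M) ≠ 0 := (hH_mem _ _).1 hg1HM
  have hgM1kb : g (M+1) = kb ∧ v M = bb := by
    rcases Finset.mem_insert.1 hgM1_short with h | h
    · exfalso
      have hvM : v M ∈ supp ka := (hsupp_mem _ _).2 (h ▸ hfgM1)
      rw [hsa, Finset.mem_singleton] at hvM
      have hvM0 : v M = v 0 := by rw [hvM, hv0]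
      have hM0 : M = 0 := D M 0 le_rfl (by omega) hvM0
      rw [hM0] at hBM h
      rw [← hg0] at h
      exact hBM.2 h
    · rw [Finset.mem_singleton] at h
      have hvM : v M ∈ supp kb := (hsupp_mem _ _).2 (h ▸ hfgM1)
      rw [hsb, Finset.mem_singleton] at hvM
      exact ⟨h, hvM⟩
  -- M = n - 1 : otherwise the walk part gives a too-small dependent set
  have hMn : M = n - 1 := by
    by_contra hMne
    have hM2n : M + 2 ≤ n := by omega
    set W : Finset (Fin (n+1)) := (Finset.range (M+2)).image g with hWdef
    set V : Finset (Fin n) := (Finset.range (M+1)).image v with hVdef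
    have hWsupp : ∀ k ∈ W, ∀ i, f k i ≠ 0 → i ∈ V := by
      intro k hk i hi
      obtain ⟨p, hp, rfl⟩ := Finset.mem_image.1 hk
      rw [Finset.mem_range] at hp
      have hisupp : i ∈ supp (g p) := (hsupp_mem _ _).2 hi
      rcases Nat.eq_zero_or_pos p with rfl | hp1
      · rw [hsupp0, Finset.mem_singleton] at hisupp
        exact Finset.mem_image.2 ⟨0, Finset.mem_range.2 (by omega), hisupp.symm⟩
      rcases Nat.lt_or_ge p (M+1) with hpM | hpM
      · have hc := (C (p-1) (by omega)).1
        have hp' : p - 1 + 1 = p := by omega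
        rw [hp'] at hc
        rw [hc, Finset.mem_insert, Finset.mem_singleton] at hisupp
        rcases hisupp with h | h
        · exact Finset.mem_image.2 ⟨p-1, Finset.mem_range.2 (by omega), h.symm⟩
        · exact Finset.mem_image.2 ⟨p, Finset.mem_range.2 (by omega), h.symm⟩
      · have hpM1 : p = M + 1 := by omega
        rw [hpM1] at hisupp
        rw [hgM1kb.1, hsb, Finset.mem_singleton] at hisupp
        rw [hisupp, ← hgM1kb.2]
        exact Finset.mem_image.2 ⟨M, Finset.mem_range.2 (by omega), rfl⟩
    have hnotW : ∀ k, k ∉ W → ∀ p, p ≤ M → f k (v p) = 0 := by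
      intro k hk p hp
      by_contra h
      have hkH : k ∈ H (v p) := (hH_mem _ _).2 h
      rw [(B p hp).1, Finset.mem_insert, Finset.mem_singleton] at hkH
      rcases hkH with rfl | rfl
      · exact hk (Finset.mem_image.2 ⟨p, Finset.mem_range.2 (by omega), rfl⟩)
      · exact hk (Finset.mem_image.2 ⟨p+1, Finset.mem_range.2 (by omega), rfl⟩)
    set c' : Fin (n+1) → ℝ := fun k => if k ∈ W then c k else 0 with hc'def
    have hcoord : ∀ i, ∑ k, c' k * f k i = 0 := by
      intro i
      by_cases hiV : i ∈ V
      · have heq : ∀ k, c' k * f k i = c k * f k i := by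
          intro k
          by_cases hk : k ∈ W
          · simp [hc'def, hk]
          · have : f k i = 0 := by
              obtain ⟨p, hp, rfl⟩ := Finset.mem_image.1 hiV
              rw [Finset.mem_range] at hp
              exact hnotW k hk p (by omega)
            simp [this]
        rw [Finset.sum_congr rfl (fun k _ => heq k)]
        have := congrArg (fun x => x i) hcsum
        rw [sum_coord] at this
        simpa using this
      · apply Finset.sum_eq_zero
        intro k _
        by_cases hk : k ∈ W
        · have : f k i = 0 := by
            by_contra h
            exact hiV (hWsupp k hk i h)
          simp [this]
        · simp [hc'def, hk]
    have hsum' : ∑ k, c' k • f k = 0 := by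
      ext i
      rw [sum_coord, hcoord i]
      rfl
    have hWcard : W.card ≤ M + 2 :=
      le_trans Finset.card_image_le (by rw [Finset.card_range])
    obtain ⟨k0, hk0⟩ : ∃ k0, k0 ∉ W := by
      by_contra hcon
      push_neg at hcon
      have : W = Finset.univ := Finset.eq_univ_iff_forall.2 hcon
      rw [this] at hWcard
      simp only [Finset.card_univ, Fintype.card_fin] at hWcard
      omega
    have hall := key c' k0 (by simp [hc'def, hk0]) hsum'
    have hkaW : ka ∈ W := Finset.mem_image.2 ⟨0, Finset.mem_range.2 (by omega), hg0⟩
    exact hcne ka (by simpa [hc'def, hkaW] using hall ka)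
  -- the permutation
  have hvinj : Function.Injective (fun i : Fin n => v i.val) := by
    intro i j hij
    exact Fin.ext (D i.val j.val (by omega) (by omega) hij)
  let σ : Equiv.Perm (Fin n) :=
    Equiv.ofBijective _ ((Fintype.bijective_iff_injective_and_card _).2 ⟨hvinj, rfl⟩)
  have hσ : ∀ i : Fin n, σ i = v i.val := fun i => rfl
  -- the signs
  let ε : ℕ → ℝ := fun m =>
    Nat.rec 1 (fun p e => -(e * (f (g (p+1)) (v p) * f (g (p+1)) (v (p+1))))) m
  have hε0 : ε 0 = 1 := rfl
  have hεs : ∀ p, ε (p+1) = -(ε p * (f (g (p+1)) (v p) * f (g (p+1)) (v (p+1)))) := fun p => rfl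
  have hs_pm : ∀ p, p < M → (f (g (p+1)) (v p) = 1 ∨ f (g (p+1)) (v p) = -1) := by
    intro p hp
    refine hval _ _ ((hH_mem _ _).1 ?_)
    rw [(B p (by omega)).1]
    exact Finset.mem_insert_of_mem (Finset.mem_singleton_self _)
  have ht_pm : ∀ p, p < M → (f (g (p+1)) (v (p+1)) = 1 ∨ f (g (p+1)) (v (p+1)) = -1) :=
    fun p hp => hval _ _ (A (p+1) (by omega))
  have hεpm : ∀ p, p ≤ M → (ε p = 1 ∨ ε p = -1) := by
    intro p
    induction p with
    | zero => intro _; left; rfl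
    | succ p ih =>
      intro h
      have h1 := hs_pm p (by omega)
      have h2 := ht_pm p (by omega)
      have h3 := ih (by omega)
      rw [hεs]
      rcases h1 with h1 | h1 <;> rcases h2 with h2 | h2 <;> rcases h3 with h3 | h3 <;>
        rw [h1, h2, h3] <;> norm_num
  have hε2 : ∀ p, p ≤ M → ε p * ε p = 1 := by
    intro p hp
    rcases hεpm p hp with h | h <;> rw [h] <;> norm_num
  set bfun : ℕ → EuclideanSpace ℝ (Fin n) := fun m => ε m • stdE n (v m) with hbdef
  have hbfun : ∀ m, bfun m = ε m • stdE n (v m) := fun m => rfl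
  -- reconstructions
  have hsupp_zero : ∀ (k) (aa : Fin n), supp k = {aa} → ∀ j, j ≠ aa → f k j = 0 := by
    intro k aa h j hj
    by_contra h'
    have := (hsupp_mem k j).2 h'
    rw [h, Finset.mem_singleton] at this
    exact hj this
  have hfka : f ka = f ka a • stdE n a := recon_one _ _ (hsupp_zero ka a hsa)
  have hfkb : f kb = f kb bb • stdE n bb := recon_one _ _ (hsupp_zero kb bb hsb)
  have hfkaa_pm : f ka a = 1 ∨ f ka a = -1 := hval _ _ hfkaa
  have hfkbb_pm : f kb bb = 1 ∨ f kb bb = -1 := by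
    refine hval _ _ ?_
    rw [← hgM1kb.1, ← hgM1kb.2]
    exact hfgM1
  set sa : ℝ := f ka a with hsadef
  set sb : ℝ := f kb bb with hsbdef
  have hsa2 : sa * sa = 1 := by rcases hfkaa_pm with h | h <;> rw [h] <;> norm_num
  have hsb2 : sb * sb = 1 := by rcases hfkbb_pm with h | h <;> rw [h] <;> norm_num
  have hεM2 := hε2 M le_rfl
  -- b 0 and b (n-1) versus the short roots
  have hb0 : bfun 0 = stdE n a := by rw [hbfun, hε0, hv0, one_smul]
  have hfka_b0 : f ka = sa • bfun 0 := by rw [hb0]; exact hfka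
  have hb0_fka : bfun 0 = sa • f ka := by
    rw [hb0, hfka, smul_smul, hsa2, one_smul]
  have hbM : bfun M = ε M • stdE n bb := by rw [hbfun, hgM1kb.2]
  have hfkb_bM : f kb = (sb * ε M) • bfun M := by
    rw [hbM, smul_smul, mul_assoc, hεM2, mul_one]
    exact hfkb
  have hbM_fkb : bfun M = (sb * ε M) • f kb := by
    rw [hbM, hfkb, smul_smul]
    have h' : sb * ε M * sb = ε M := by linear_combination ε M * hsb2
    rw [h']
  have hfkbM_pm : sb * ε M = 1 ∨ sb * ε M = -1 := by
    rcases hfkbb_pm with h | h <;> rcases hεpm M le_rfl with h' | h' <;> rw [h, h'] <;> norm_num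
  -- the long roots versus the differences of b's
  have hdiff : ∀ p, p < M →
      f (g (p+1)) = (ε p * f (g (p+1)) (v p)) • (bfun p - bfun (p+1)) ∧
      (ε p * f (g (p+1)) (v p) = 1 ∨ ε p * f (g (p+1)) (v p) = -1) := by
    intro p hp
    set s : ℝ := f (g (p+1)) (v p) with hsdef
    set t : ℝ := f (g (p+1)) (v (p+1)) with htdef
    have hspm' : s = 1 ∨ s = -1 := by rw [hsdef]; exact hs_pm p hp
    have htpm' : t = 1 ∨ t = -1 := by rw [htdef]; exact ht_pm p hp
    have hs2 : s * s = 1 := by rcases hspm' with h | h <;> rw [h] <;> norm_num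
    have hεp2 := hε2 p (by omega)
    have hCp := C p hp
    have hrecon : f (g (p+1)) = s • stdE n (v p) + t • stdE n (v (p+1)) := by
      refine recon_two _ _ _ (Ne.symm hCp.2) ?_
      intro j hj1 hj2
      by_contra h'
      have := (hsupp_mem _ _).2 h'
      rw [hCp.1, Finset.mem_insert, Finset.mem_singleton] at this
      rcases this with h | h
      · exact hj1 h
      · exact hj2 h
    have e1 : ε p * s * ε p = s := by linear_combination s * hεp2
    have e2 : ε p * s * ε (p+1) = -t := by
      rw [hεs p, ← hsdef, ← htdef]
      linear_combination (-(s*s*t)) * hεp2 + (-t) * hs2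
    constructor
    · calc f (g (p+1)) = s • stdE n (v p) + t • stdE n (v (p+1)) := hrecon
      _ = (ε p * s * ε p) • stdE n (v p) - (ε p * s * ε (p+1)) • stdE n (v (p+1)) := by
          rw [e1, e2, neg_smul, sub_neg_eq_add]
      _ = (ε p * s) • (bfun p - bfun (p+1)) := by
          simp only [hbfun]
          rw [smul_sub, smul_smul, smul_smul]
    · rcases hεpm p (by omega) with h | h <;> rcases hspm' with h' | h' <;>
        rw [h, h'] <;> norm_num
  -- every index is hit by the walk
  have hgfull_inj : ∀ p q, p ≤ M + 1 → q ≤ M + 1 → g p = g q → p = q := by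
    have haux : ∀ q, q ≤ M → g q ≠ g (M+1) := by
      intro q hq hpq
      rcases Nat.eq_zero_or_pos q with rfl | hq1
      · rw [hg0, hgM1kb.1] at hpq
        exact hkab hpq
      · have h2 := hQM q hq1 hq
        rw [hpq, hgM1kb.1, hsb] at h2
        simp at h2
    intro p q hp hq hpq
    rcases Nat.lt_or_ge p (M+1) with h1 | h1 <;> rcases Nat.lt_or_ge q (M+1) with h2 | h2
    · exact E p q (by omega) (by omega) hpq
    · exact absurd ((by omega : q = M+1) ▸ hpq) (haux p (by omega))
    · exact absurd ((by omega : p = M+1) ▸ hpq).symm (haux q (by omega))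
    · omega
  have hgsurj : ∀ k, ∃ p, p ≤ M + 1 ∧ g p = k := by
    have hcard : ((Finset.range (M+2)).image g).card = M + 2 := by
      rw [Finset.card_image_of_injOn, Finset.card_range]
      intro p hp q hq hpq
      exact hgfull_inj p q (by simp only [Finset.mem_coe, Finset.mem_range] at hp; omega)
        (by simp only [Finset.mem_coe, Finset.mem_range] at hq; omega) hpq
    have huniv : (Finset.range (M+2)).image g = Finset.univ := by
      apply Finset.eq_univ_of_card
      rw [hcard, Fintype.card_fin]
      omega
    intro k
    have : k ∈ (Finset.range (M+2)).image g := by rw [huniv]; exact Finset.mem_univ k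
    obtain ⟨p, hp, hpk⟩ := Finset.mem_image.1 this
    rw [Finset.mem_range] at hp
    exact ⟨p, by omega, hpk⟩
  have pm_cases : ∀ (cc : ℝ) (x y : EuclideanSpace ℝ (Fin n)),
      (cc = 1 ∨ cc = -1) → x = cc • y → x = y ∨ x = -y := by
    rintro cc x y (rfl | rfl) rfl
    · left; rw [one_smul]
    · right; rw [neg_one_smul]
  -- final set equality
  refine ⟨σ, fun i => ε i.val, fun i => hεpm i.val (by omega), bfun, fun i => rfl, ?_⟩
  have hn1M : n - 1 = M := hMn.symm
  ext x
  simp only [Set.mem_setOf_eq, Set.mem_union]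
  constructor
  · rintro ⟨k, hk⟩
    obtain ⟨p, hpM, rfl⟩ := hgsurj k
    rcases Nat.eq_zero_or_pos p with rfl | hp1
    · left
      rw [hg0] at hk
      rcases pm_cases _ _ _ hfkaa_pm hfka_b0 with h | h <;> rcases hk with rfl | rfl
      · exact Or.inl h
      · exact Or.inr (Or.inl (by rw [h]))
      · exact Or.inr (Or.inl (by rw [h]))
      · exact Or.inl (by rw [h, neg_neg])
    rcases Nat.lt_or_ge p (M+1) with hpM1 | hpM1
    · -- 1 ≤ p ≤ M : a difference
      right
      obtain ⟨p', rfl⟩ : ∃ p', p = p' + 1 := ⟨p - 1, by omega⟩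
      obtain ⟨hd, hdpm⟩ := hdiff p' (by omega)
      refine ⟨p', by omega, ?_⟩
      rcases pm_cases _ _ _ hdpm hd with h | h <;> rcases hk with rfl | rfl
      · exact Or.inl h
      · exact Or.inr (by rw [h])
      · exact Or.inr (by rw [h])
      · exact Or.inl (by rw [h, neg_neg])
    · -- p = M + 1 : the short root kb
      left
      have hpeq : p = M + 1 := by omega
      rw [hpeq, hgM1kb.1] at hk
      rw [hn1M]
      rcases pm_cases _ _ _ hfkbM_pm hfkb_bM with h | h <;> rcases hk with rfl | rfl
      · exact Or.inr (Or.inr (Or.inl h))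
      · exact Or.inr (Or.inr (Or.inr (by rw [h])))
      · exact Or.inr (Or.inr (Or.inr (by rw [h])))
      · exact Or.inr (Or.inr (Or.inl (by rw [h, neg_neg])))
  · rintro (h | ⟨i, hi, h⟩)
    · rw [hn1M] at h
      rcases h with rfl | rfl | rfl | rfl
      · exact ⟨ka, (pm_cases _ _ _ hfkaa_pm hb0_fka).imp id (fun h => h)⟩
      · refine ⟨ka, ?_⟩
        rcases pm_cases _ _ _ hfkaa_pm hb0_fka with h | h
        · exact Or.inr (by rw [h])
        · exact Or.inl (by rw [h, neg_neg])
      · exact ⟨kb, (pm_cases _ _ _ hfkbM_pm hbM_fkb).imp id (fun h => h)⟩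
      · refine ⟨kb, ?_⟩
        rcases pm_cases _ _ _ hfkbM_pm hbM_fkb with h | h
        · exact Or.inr (by rw [h])
        · exact Or.inl (by rw [h, neg_neg])
    · -- differences
      have hiM : i < M := by omega
      obtain ⟨hd, hdpm⟩ := hdiff i hiM
      set cc : ℝ := ε i * f (g (i+1)) (v i) with hccdef
      have hsq : cc * cc = 1 := by
        rcases hdpm with h | h <;> rw [h] <;> norm_num
      have hinv : bfun i - bfun (i+1) = cc • f (g (i+1)) := by
        rw [hd, smul_smul, hsq, one_smul]
      rcases h with rfl | rfl
      · exact ⟨g (i+1), pm_cases _ _ _ hdpm hinv⟩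
      · refine ⟨g (i+1), ?_⟩
        rcases pm_cases _ _ _ hdpm hinv with h | h
        · exact Or.inr (by rw [h])
        · exact Or.inl (by rw [h, neg_neg])
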